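/- Let a ≥ 1 and b ≥ 1 be natural numbers, θ > 0 and c > 0 reals. Define G(x) = (1 − e^{−θx} · Σ_{p=0}^{b−1} (θx)^p/p!)^a for x ≥ 0. Then lim_{γ→∞} γ^{ab} · G(c/γ) = (θ^b c^b / b!)^a. (This is the high-SNR asymptotic average BLER, Eqs. (36)–(37) evaluated with c equal to β/(α_H − α_L β) or β/α_L.) -/

import Mathlib

open Filter Finset Real

/-- Taylor remainder limit: `(exp x - ∑_{p<b} x^p/p!)/x^b → 1/b!` as `x → 0⁺`. -/
lemma tail_lim (b : ℕ) :
    Tendsto (fun x : ℝ =>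
        (Real.exp x - ∑ p ∈ Finset.range b, x ^ p / p.factorial) / x ^ b)
      (nhdsWithin 0 (Set.Ioi 0)) (nhds (1 / (b.factorial : ℝ))) := by
  set C : ℝ := ((b + 2 : ℕ) : ℝ) / ((b + 1).factorial * (b + 1)) with hC
  rw [← tendsto_sub_nhds_zero_iff]
  apply squeeze_zero_norm' (a := fun x : ℝ => C * x)
  · have hmem : Set.Ioc (0:ℝ) 1 ∈ nhdsWithin (0:ℝ) (Set.Ioi 0) :=
      Ioc_mem_nhdsGT_of_mem ⟨le_refl 0, one_pos⟩
    filter_upwards [hmem] with x hx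
    obtain ⟨hx0, hx1⟩ := hx
    have hxabs : |x| ≤ 1 := by rw [abs_of_pos hx0]; exact hx1
    have hbd := Real.exp_bound hxabs (n := b + 1) (Nat.succ_pos b)
    rw [abs_of_pos hx0] at hbd
    have hsum : ∑ p ∈ Finset.range (b + 1), x ^ p / p.factorial
        = (∑ p ∈ Finset.range b, x ^ p / p.factorial) + x ^ b / b.factorial := by
      rw [Finset.sum_range_succ]
    have hxb : (0:ℝ) < x ^ b := pow_pos hx0 b
    have key : (Real.exp x - ∑ p ∈ Finset.range b, x ^ p / p.factorial) / x ^ b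
        - 1 / (b.factorial : ℝ)
        = (Real.exp x - ∑ p ∈ Finset.range (b + 1), x ^ p / p.factorial) / x ^ b := by
      rw [hsum]
      have hbf : ((b.factorial : ℝ)) ≠ 0 := Nat.cast_ne_zero.2 b.factorial_ne_zero
      field_simp
      ring
    rw [key, norm_div, Real.norm_eq_abs, Real.norm_eq_abs, abs_of_pos hxb]
    rw [div_le_iff₀ hxb]
    refine le_trans hbd (le_of_eq ?_)
    rw [hC]; push_cast; ring
  · have : Tendsto (fun x : ℝ => C * x) (nhdsWithin 0 (Set.Ioi 0)) (nhds (C * 0)) :=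
      (tendsto_id.const_mul C).mono_left nhdsWithin_le_nhds
    simpa using this

/-- High-SNR asymptotic average BLER (Eqs. (36)–(37)):
for `G(x) = (1 − e^{−θx} Σ_{p<b} (θx)^p/p!)^a` and `c > 0`,
`lim_{γ→∞} γ^{ab} G(c/γ) = (θ^b c^b/b!)^a`. -/
theorem stmt_9 (a b : ℕ) (ha : 1 ≤ a) (hb : 1 ≤ b) (θ c : ℝ) (hθ : 0 < θ) (hc : 0 < c)
    (G : ℝ → ℝ)
    (hG : ∀ x, G x =
      (1 - Real.exp (-θ * x) * ∑ p ∈ Finset.range b, (θ * x) ^ p / p.factorial) ^ a) :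
    Filter.Tendsto (fun γ : ℝ => γ ^ (a * b) * G (c / γ))
      Filter.atTop (nhds ((θ ^ b * c ^ b / (b.factorial : ℝ)) ^ a)) := by
  have hmap : Tendsto (fun γ : ℝ => θ * c / γ) atTop (nhdsWithin 0 (Set.Ioi 0)) := by
    rw [tendsto_nhdsWithin_iff]
    constructor
    · exact Tendsto.div_atTop tendsto_const_nhds tendsto_id
    · filter_upwards [eventually_gt_atTop (0:ℝ)] with γ hγ
      exact div_pos (mul_pos hθ hc) hγ
  set g : ℝ → ℝ := fun y =>
    (Real.exp y - ∑ p ∈ Finset.range b, y ^ p / p.factorial) / y ^ b with hg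
  have hKlim : Tendsto
      (fun γ : ℝ => Real.exp (-(θ * c / γ)) * (θ ^ b * c ^ b * g (θ * c / γ)))
      atTop (nhds (θ ^ b * c ^ b / (b.factorial : ℝ))) := by
    have h1 : Tendsto (fun γ : ℝ => Real.exp (-(θ * c / γ))) atTop (nhds 1) := by
      have : Tendsto (fun γ : ℝ => -(θ * c / γ)) atTop (nhds 0) := by
        have := (Tendsto.div_atTop (tendsto_const_nhds (x := θ * c)) tendsto_id (l := atTop)).neg
        simpa using this
      simpa [Function.comp_def] using (Real.continuous_exp.tendsto 0).comp this
    have h2 : Tendsto (fun γ : ℝ => θ ^ b * c ^ b * g (θ * c / γ)) atTop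
        (nhds (θ ^ b * c ^ b * (1 / (b.factorial : ℝ)))) :=
      (((tail_lim b).comp hmap).const_mul _)
    have := h1.mul h2
    rw [one_mul] at this
    convert this using 2
    ring
  have hfinal := hKlim.pow a
  apply hfinal.congr'
  filter_upwards [eventually_gt_atTop (0:ℝ)] with γ hγ
  have hu0 : 0 < θ * c / γ := div_pos (mul_pos hθ hc) hγ
  have hγb : (γ:ℝ) ^ b ≠ 0 := (pow_pos hγ b).ne'
  have hub : (θ * c / γ) ^ b = θ ^ b * c ^ b / γ ^ b := by
    rw [div_pow, mul_pow]
  rw [hG]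
  have e1 : -θ * (c / γ) = -(θ * c / γ) := by ring
  have e2 : θ * (c / γ) = θ * c / γ := by ring
  rw [e1, e2]
  set S : ℝ := ∑ p ∈ Finset.range b, (θ * c / γ) ^ p / p.factorial with hS
  have hsplit : 1 - Real.exp (-(θ * c / γ)) * S
      = Real.exp (-(θ * c / γ)) * (Real.exp (θ * c / γ) - S) := by
    rw [mul_sub, ← Real.exp_add]
    simp
  have hθc : (θ:ℝ) ^ b * c ^ b ≠ 0 := by positivity
  have hbase : Real.exp (-(θ * c / γ)) * (θ ^ b * c ^ b * g (θ * c / γ))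
      = γ ^ b * (Real.exp (-(θ * c / γ)) * (Real.exp (θ * c / γ) - S)) := by
    simp only [hg, ← hS]
    rw [hub]
    field_simp
  rw [hsplit, hbase, mul_pow, ← pow_mul, mul_comm b a]
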